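/- Let s and n be positive integers such that p := n+1 is prime. Then for every j ∈ {0,1,...,p−1}: M_{s,n,p}(j) = p^{s−1}·φ(p) = p^{s−1}(p−1) if j = 0, and M_{s,n,p}(j) = −p^{s−1} if j ≠ 0, where φ is Euler's totient function. -/

import Mathlib

/-- `T s n` is the polynomial `∏_{j=1}^{n} (1 - q^j)^s`. -/
noncomputable def T (s n : ℕ) : Polynomial ℤ :=
  ∏ j ∈ Finset.Icc 1 n, (1 - Polynomial.X ^ j) ^ s

/-- `Nsn s n = s·n(n+1)/2`, the degree of `T s n`. -/
def Nsn (s n : ℕ) : ℕ := s * n * (n + 1) / 2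

/-- `M s n N j = Σ_{0 ≤ i ≤ N_{s,n}, i ≡ j (mod N)} t_{i,s,n}`. -/
noncomputable def M (s n N j : ℕ) : ℤ :=
  ∑ i ∈ (Finset.range (Nsn s n + 1)).filter (fun i => i % N = j), (T s n).coeff i

open Polynomial Finset

-- Step 1: product of (1 - ζ^j) over j = 1..p-1 equals p, for ζ a primitive p-th root in ℂ.
lemma prod_one_sub_zeta (p : ℕ) (hp : p.Prime) {ζ : ℂ} (hζ : IsPrimitiveRoot ζ p) :
    ∏ j ∈ Icc 1 (p - 1), (1 - ζ ^ j) = (p : ℂ) := by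
  haveI : Fact p.Prime := ⟨hp⟩
  have hcop : ∀ j ∈ Icc 1 (p - 1), IsPrimitiveRoot (ζ ^ j) p := by
    intro j hj
    rw [mem_Icc] at hj
    refine hζ.pow_of_coprime j (Nat.Coprime.symm (hp.coprime_iff_not_dvd.mpr ?_))
    intro hdvd
    have := Nat.le_of_dvd (by omega) hdvd
    omega
  have hinj : Set.InjOn (fun j => ζ ^ j) (Icc 1 (p - 1)) := by
    intro a ha b hb hab
    rw [coe_Icc, Set.mem_Icc] at ha hb
    exact hζ.pow_inj (by omega) (by omega) hab
  have himg : (Icc 1 (p - 1)).image (fun j => ζ ^ j) = primitiveRoots p ℂ := by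
    apply Finset.eq_of_subset_of_card_le
    · intro x hx
      rw [mem_image] at hx
      obtain ⟨j, hj, rfl⟩ := hx
      exact (mem_primitiveRoots hp.pos).mpr (hcop j hj)
    · rw [Finset.card_image_of_injOn hinj, hζ.card_primitiveRoots, Nat.card_Icc,
        Nat.totient_prime hp]
      omega
  have h1 : eval 1 (cyclotomic p ℂ) = ∏ μ ∈ primitiveRoots p ℂ, (1 - μ) := by
    rw [cyclotomic_eq_prod_X_sub_primitiveRoots hζ, eval_prod]
    simp
  rw [← himg, Finset.prod_image hinj] at h1
  rw [← h1, eval_one_cyclotomic_prime]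

-- Step 2: key divisibility in ℤ[X].
lemma key_dvd (p : ℕ) (hp : p.Prime) :
    (X ^ p - 1 : ℤ[X]) ∣
      (∏ j ∈ Icc 1 (p - 1), (1 - X ^ j)) - (C (p : ℤ) - ∑ i ∈ range p, X ^ i) := by
  haveI : Fact p.Prime := ⟨hp⟩
  have hgeom : (∑ i ∈ range p, (X : ℤ[X]) ^ i) = cyclotomic p ℤ := (cyclotomic_prime ℤ p).symm
  rw [hgeom, ← cyclotomic_prime_mul_X_sub_one ℤ p]
  set Φ : ℤ[X] := cyclotomic p ℤ with hΦ
  set Pr : ℤ[X] := ∏ j ∈ Icc 1 (p - 1), (1 - X ^ j) with hPr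
  have hζ := Complex.isPrimitiveRoot_exp p hp.ne_zero
  set ζ : ℂ := Complex.exp (2 * Real.pi * Complex.I / p)
  have h2 : Φ ∣ Pr - C (p : ℤ) := by
    rw [hΦ, cyclotomic_eq_minpoly hζ hp.pos]
    refine minpoly.isIntegrallyClosed_dvd (hζ.isIntegral hp.pos) ?_
    rw [map_sub, map_prod, aeval_C]
    simp only [map_sub, map_one, map_pow, aeval_X]
    rw [prod_one_sub_zeta p hp hζ]
    simp
  have h1 : (X - 1 : ℤ[X]) ∣ Pr - (C (p : ℤ) - Φ) := by
    have : (X - C (1:ℤ)) ∣ Pr - (C (p : ℤ) - Φ) := by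
      rw [dvd_iff_isRoot]
      unfold Pr Φ
      simp only [IsRoot.def, eval_sub, eval_prod, eval_one, eval_pow, eval_X, eval_C,
        one_pow, sub_self, eval_one_cyclotomic_prime]
      rw [Finset.prod_eq_zero (i := 1) (by rw [mem_Icc]; have := hp.two_le; omega : 1 ∈ Icc 1 (p-1)) (by simp)]
      ring
    simpa using this
  obtain ⟨c, hc⟩ := h1
  have hΦp : Prime Φ := (cyclotomic.irreducible hp.pos).prime
  have hΦdvd : Φ ∣ (X - 1) * c := by
    rw [← hc]
    have : Pr - (C (p:ℤ) - Φ) = (Pr - C (p:ℤ)) + Φ := by ring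
    rw [this]
    exact dvd_add h2 dvd_rfl
  have hnd : ¬ Φ ∣ (X - 1 : ℤ[X]) := by
    intro h
    have hdeg := natDegree_le_of_dvd h (by
      intro h0
      have := congrArg (eval 0) h0
      simp at this)
    rw [hΦ, natDegree_cyclotomic, Nat.totient_prime hp] at hdeg
    have : natDegree (X - 1 : ℤ[X]) ≤ 1 := by
      simpa using natDegree_sub_le (X : ℤ[X]) 1
    have hp2 : p = 2 := by have := hp.two_le; omega
    subst hp2
    rw [hΦ, cyclotomic_two] at h
    have := eval_dvd (x := (-1 : ℤ)) h
    simp at this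
  have hc' : Φ ∣ c := (hΦp.dvd_or_dvd hΦdvd).resolve_left hnd
  obtain ⟨d, hd⟩ := hc'
  exact ⟨d, by rw [hc, hd]; ring⟩



noncomputable def phi (p : ℕ) : Polynomial ℤ →+* AddMonoidAlgebra ℤ (ZMod p) :=
  (AddMonoidAlgebra.mapDomainRingHom ℤ (Nat.castAddMonoidHom (ZMod p))).comp
    (Polynomial.toFinsuppIso ℤ).toRingHom

lemma phi_apply (p : ℕ) (P : ℤ[X]) :
    phi p P = AddMonoidAlgebra.mapDomain (Nat.cast : ℕ → ZMod p) P.toFinsupp := rfl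

lemma phi_coeff (p : ℕ) (P : ℤ[X]) (a : ZMod p) :
    (phi p P).coeff a = ∑ i ∈ P.support, if (i : ZMod p) = a then P.coeff i else 0 := by
  rw [phi_apply, AddMonoidAlgebra.coeff_mapDomain, Finsupp.mapDomain, Finsupp.sum_apply, Finsupp.sum]
  apply Finset.sum_congr rfl
  intro i _
  rw [Finsupp.single_apply]
  rfl

lemma phi_X_pow (p k : ℕ) :
    phi p (X ^ k) = AddMonoidAlgebra.single ((k : ZMod p)) (1 : ℤ) := by
  rw [map_pow]
  have h1 : phi p X = AddMonoidAlgebra.single ((1 : ZMod p)) (1 : ℤ) := by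
    rw [phi_apply, Polynomial.toFinsupp_X, AddMonoidAlgebra.mapDomain_single, Nat.cast_one]
  rw [h1, AddMonoidAlgebra.single_pow]
  simp

lemma phi_C (p : ℕ) (c : ℤ) : phi p (C c) = AddMonoidAlgebra.single (0 : ZMod p) c := by
  rw [phi_apply, Polynomial.toFinsupp_C, AddMonoidAlgebra.mapDomain_single, Nat.cast_zero]

/-- the "all-ones" element of the group algebra -/
noncomputable def PhiA (p : ℕ) [NeZero p] : AddMonoidAlgebra ℤ (ZMod p) :=
  ∑ a : ZMod p, AddMonoidAlgebra.single a (1 : ℤ)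

lemma single_mul_PhiA (p : ℕ) [NeZero p] (b : ZMod p) (c : ℤ) :
    AddMonoidAlgebra.single b c * PhiA p = c • PhiA p := by
  rw [PhiA, Finset.mul_sum, Finset.smul_sum]
  refine Fintype.sum_equiv (Equiv.addLeft b) _ _ (fun a => ?_)
  rw [AddMonoidAlgebra.single_mul_single, AddMonoidAlgebra.smul_single']
  simp

lemma PhiA_mul_PhiA (p : ℕ) [NeZero p] :
    PhiA p * PhiA p = (p : ℤ) • PhiA p := by
  nth_rewrite 1 [PhiA]
  rw [Finset.sum_mul]
  have h : ∀ a : ZMod p, AddMonoidAlgebra.single a (1:ℤ) * PhiA p = PhiA p := fun a => by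
    rw [single_mul_PhiA, one_smul]
  rw [Finset.sum_congr rfl (fun a _ => h a), Finset.sum_const, Finset.card_univ, ZMod.card]
  rw [natCast_zsmul]

lemma pow_key (p : ℕ) [NeZero p] (k : ℕ) :
    (AddMonoidAlgebra.single (0 : ZMod p) ((p : ℤ)) - PhiA p) ^ (k + 1)
      = AddMonoidAlgebra.single (0 : ZMod p) ((p : ℤ) ^ (k + 1)) - ((p : ℤ) ^ k) • PhiA p := by
  induction k with
  | zero =>
    rw [pow_one, pow_one, pow_zero, one_smul]
  | succ k ih =>
    rw [pow_succ, ih, sub_mul, mul_sub, mul_sub, AddMonoidAlgebra.single_mul_single,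
      single_mul_PhiA, smul_mul_assoc, smul_mul_assoc,
      mul_comm (PhiA p) (AddMonoidAlgebra.single (0 : ZMod p) ((p : ℤ))),
      single_mul_PhiA, PhiA_mul_PhiA, smul_smul]
    simp only [add_zero, sub_self, sub_zero, ← pow_succ]

lemma sum_range_single (p : ℕ) [NeZero p] :
    ∑ i ∈ Finset.range p, AddMonoidAlgebra.single ((i : ZMod p)) (1 : ℤ) = PhiA p := by
  rw [PhiA]
  have hinj : Set.InjOn (Nat.cast : ℕ → ZMod p) (Finset.range p) := by
    intro x hx y hy hxy
    rw [coe_range, Set.mem_Iio] at hx hy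
    rw [ZMod.natCast_eq_natCast_iff'] at hxy
    rwa [Nat.mod_eq_of_lt hx, Nat.mod_eq_of_lt hy] at hxy
  have himg : (Finset.range p).image (Nat.cast : ℕ → ZMod p) = Finset.univ := by
    apply Finset.eq_univ_of_card
    rw [Finset.card_image_of_injOn hinj, Finset.card_range, ZMod.card]
  rw [← himg, Finset.sum_image hinj]

lemma phi_T1 (n : ℕ) (hn : 0 < n) (hp : (n + 1).Prime) :
    phi (n + 1) (T 1 n)
      = AddMonoidAlgebra.single (0 : ZMod (n + 1)) (((n + 1 : ℕ) : ℤ)) - PhiA (n + 1) := by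
  obtain ⟨Q, hQ⟩ := key_dvd (n + 1) hp
  simp only [Nat.add_sub_cancel] at hQ
  have hT : T 1 n
      = (C (((n+1 : ℕ)) : ℤ) - ∑ i ∈ Finset.range (n+1), X ^ i) + (X ^ (n+1) - 1) * Q := by
    rw [T]
    simp only [pow_one]
    linear_combination hQ
  rw [hT, map_add, map_mul, map_sub (phi (n+1)), map_sub (phi (n+1)), phi_C, map_one,
    phi_X_pow, map_sum]
  simp only [phi_X_pow]
  rw [sum_range_single, ZMod.natCast_self]
  rw [show AddMonoidAlgebra.single (0 : ZMod (n+1)) (1:ℤ) = 1 from rfl]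
  ring

lemma natDegree_T_le (s n : ℕ) : (T s n).natDegree ≤ Nsn s n := by
  have h1 : (T s n).natDegree ≤ ∑ j ∈ Icc 1 n, ((1 - X ^ j : ℤ[X]) ^ s).natDegree :=
    natDegree_prod_le _ _
  have h2 : ∀ j ∈ Icc 1 n, ((1 - X ^ j : ℤ[X]) ^ s).natDegree ≤ s * j := by
    intro j _
    calc ((1 - X ^ j : ℤ[X]) ^ s).natDegree ≤ s * (1 - X ^ j : ℤ[X]).natDegree :=
          natDegree_pow_le
      _ ≤ s * j := by
          apply Nat.mul_le_mul_left
          have := natDegree_sub_le (1 : ℤ[X]) (X ^ j)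
          simpa using this
  have h4 : ∑ j ∈ Icc 1 n, j = n * (n + 1) / 2 := by
    have he : ∑ j ∈ range (n + 1), j = ∑ j ∈ Icc 1 n, j := by
      rw [← Finset.Ico_add_one_right_eq_Icc, range_eq_Ico,
        Finset.sum_eq_sum_Ico_succ_bot (Nat.succ_pos n)]
      norm_num
    have h2' : (∑ j ∈ Icc 1 n, j) * 2 = n * (n + 1) := by
      rw [← he, Finset.sum_range_id_mul_two (n + 1)]
      simp [Nat.mul_comm]
    omega
  have h5 : Nsn s n = s * (n * (n + 1) / 2) := by
    rw [Nsn, mul_assoc, Nat.mul_div_assoc s (Nat.even_mul_succ_self n).two_dvd]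
  calc (T s n).natDegree ≤ ∑ j ∈ Icc 1 n, ((1 - X ^ j : ℤ[X]) ^ s).natDegree := h1
    _ ≤ ∑ j ∈ Icc 1 n, s * j := Finset.sum_le_sum h2
    _ = s * ∑ j ∈ Icc 1 n, j := by rw [Finset.mul_sum]
    _ = Nsn s n := by rw [h4, h5]

/-- Theorem (main1 for `p = n+1` prime): `M_{s,n,p}(j) = p^{s-1}(p-1)` if `j = 0`,
and `M_{s,n,p}(j) = -p^{s-1}` otherwise. -/
theorem stmt7 (s n : ℕ) (hs : 0 < s) (hn : 0 < n) (hp : Nat.Prime (n + 1))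
    (j : ℕ) (hj : j < n + 1) :
    M s n (n + 1) j =
      if j = 0 then ((n + 1 : ℤ)) ^ (s - 1) * (Nat.totient (n + 1) : ℤ)
      else -((n + 1 : ℤ)) ^ (s - 1) := by
  haveI : NeZero (n + 1) := ⟨n.succ_ne_zero⟩
  have hA : M s n (n + 1) j = (phi (n + 1) (T s n)).coeff ((j : ZMod (n + 1))) := by
    rw [phi_coeff, M, Finset.sum_filter]
    have hsub : (T s n).support ⊆ Finset.range (Nsn s n + 1) := by
      intro i hi
      rw [Finset.mem_range, Nat.lt_succ_iff]
      exact le_trans (le_natDegree_of_mem_supp i hi) (natDegree_T_le s n)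
    rw [Finset.sum_subset hsub (fun i _ hi => by
      rw [notMem_support_iff.mp hi, ite_self])]
    apply Finset.sum_congr rfl
    intro i _
    congr 1
    rw [eq_iff_iff, ZMod.natCast_eq_natCast_iff', Nat.mod_eq_of_lt hj]
  have hTs : T s n = (T 1 n) ^ s := by
    rw [T, T]
    simp only [pow_one]
    rw [Finset.prod_pow]
  obtain ⟨k, rfl⟩ : ∃ k, s = k + 1 := ⟨s - 1, by omega⟩
  have hB : phi (n + 1) (T (k + 1) n)
      = AddMonoidAlgebra.single (0 : ZMod (n + 1)) (((n + 1 : ℕ) : ℤ) ^ (k + 1))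
        - (((n + 1 : ℕ) : ℤ) ^ k) • PhiA (n + 1) := by
    rw [hTs, map_pow, phi_T1 n hn hp, pow_key]
  have hPhiAj : (PhiA (n + 1)).coeff ((j : ZMod (n + 1))) = 1 := by
    rw [PhiA, AddMonoidAlgebra.coeff_sum, Finset.sum_apply']
    simp [AddMonoidAlgebra.coeff_single, Finsupp.single_apply]
  rw [hA, hB, AddMonoidAlgebra.coeff_sub, Finsupp.sub_apply, AddMonoidAlgebra.coeff_smul, Finsupp.smul_apply, hPhiAj,
    AddMonoidAlgebra.coeff_single, Finsupp.single_apply]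
  simp only [Nat.add_sub_cancel]
  by_cases hj0 : j = 0
  · subst hj0
    simp only [Nat.cast_zero, if_pos rfl]
    rw [Nat.totient_prime hp]
    simp only [if_true, smul_eq_mul, mul_one, Nat.add_sub_cancel]
    push_cast
    ring
  · rw [if_neg hj0]
    have hne : (0 : ZMod (n + 1)) ≠ ((j : ℕ) : ZMod (n + 1)) := by
      intro h
      have hd : (n + 1) ∣ j := (ZMod.natCast_eq_zero_iff j (n + 1)).mp h.symm
      have := Nat.le_of_dvd (Nat.pos_of_ne_zero hj0) hd
      omega
    rw [if_neg hne]
    simp only [smul_eq_mul, mul_one, zero_sub]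
    push_cast
    ring
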